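/- Let (Ω_i, σ_i, P_i), for i = 1, …, n, be probability spaces and let (Ω, σ, P) be their product. Let S be a finite set and let X : Ω → S be a measurable random variable. Then for every ε > 0 and every i ∈ {1,…,n} there exist a finite subset F_i ⊆ Ω_i and a measurable function φ_i : Ω_i → Ω_i with range contained in F_i, such that the map φ : Ω → Ω defined by φ(ω₁,…,ω_n) = (φ₁(ω₁),…,φ_n(ω_n)) satisfies P[{ω ∈ Ω : X(ω) ≠ X(φ(ω))}] < ε. -/

import Mathlib

open MeasureTheory Set
open scoped ENNReal symmDiff

section Aux

lemma aux_measurable_of_finite_range {α : Type*} [MeasurableSpace α] {f : α → α} {F : Finset α}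
    (hF : ∀ x, f x ∈ F) (hfib : ∀ y, MeasurableSet (f ⁻¹' {y})) : Measurable f := by
  intro t ht
  have : f ⁻¹' t = ⋃ y ∈ (F : Set α) ∩ t, f ⁻¹' {y} := by
    ext x
    simp only [mem_preimage, mem_iUnion, mem_inter_iff, mem_singleton_iff, exists_prop]
    exact ⟨fun h => ⟨f x, ⟨hF x, h⟩, rfl⟩, fun ⟨y, ⟨_, hy⟩, hxy⟩ => hxy ▸ hy⟩
  rw [this]
  exact MeasurableSet.biUnion ((F.finite_toSet.inter_of_left t).countable) fun y _ => hfib y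

lemma aux_exists_le_avg {α : Type*} [MeasurableSpace α] {μ : Measure α} [IsFiniteMeasure μ]
    {h : α → ℝ≥0∞} (hm : Measurable h) (hb : ∀ x, h x ≤ 1) {a : Set α}
    (hma : MeasurableSet a) (ha : a.Nonempty) :
    ∃ y ∈ a, h y * μ a ≤ ∫⁻ x in a, h x ∂μ := by
  by_contra hcon
  push_neg at hcon
  set c := ∫⁻ x in a, h x ∂μ with hc
  have hμa : μ a ≠ 0 := by
    intro h0
    rcases ha with ⟨y, hy⟩
    have := hcon y hy
    simp [h0] at this
  have hμa' : μ a ≠ ∞ := measure_ne_top μ a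
  have hc_le : c ≤ μ a := by
    calc c ≤ ∫⁻ _ in a, 1 ∂μ := lintegral_mono hb
    _ = μ a := by simp
  have hc_ne : c ≠ ∞ := (hc_le.trans_lt (measure_lt_top μ a)).ne
  set c' := c / μ a with hc'
  have hc'_ne : c' ≠ ∞ := by
    simp only [hc']
    exact (ENNReal.div_lt_top hc_ne hμa).ne
  have hlt : ∀ y ∈ a, c' < h y := by
    intro y hy
    rw [hc', ENNReal.div_lt_iff (Or.inl hμa) (Or.inl hμa')]
    exact hcon y hy
  have hint_c' : ∫⁻ _ in a, c' ∂μ = c := by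
    rw [setLIntegral_const, hc', ENNReal.div_mul_cancel hμa hμa']
  have hzero : ∫⁻ x in a, (h x - c') ∂μ = 0 := by
    rw [lintegral_sub measurable_const (by rw [hint_c']; exact hc_ne)
      ((ae_restrict_iff' hma).2 (Filter.Eventually.of_forall fun y hy => (hlt y hy).le))]
    rw [hint_c', tsub_self]
  have h0 := (lintegral_eq_zero_iff (hm.sub measurable_const)).1 hzero
  have h0' : μ.restrict a {x | ¬ (h x - c' = 0)} = 0 := by
    have := h0
    rw [Filter.EventuallyEq, ae_iff] at this
    simpa using this
  have hsub : a ⊆ {x | ¬ (h x - c' = 0)} := by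
    intro y hy
    simp only [mem_setOf_eq, tsub_eq_zero_iff_le, not_le]
    exact hlt y hy
  have : μ a = 0 := by
    have := measure_mono_null hsub h0'
    rwa [Measure.restrict_apply_self] at this
  exact hμa this

end Aux

section Rect

variable {A B : Type*} [MeasurableSpace A] [MeasurableSpace B]

/-- Finite unions of measurable rectangles. -/
def rectAlg (A B : Type*) [MeasurableSpace A] [MeasurableSpace B] : Set (Set (A × B)) :=
  {t | ∃ I : Finset (Set A × Set B),
    (∀ p ∈ I, MeasurableSet p.1 ∧ MeasurableSet p.2) ∧ t = ⋃ p ∈ I, p.1 ×ˢ p.2}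

lemma rectAlg_measurable {t : Set (A × B)} (ht : t ∈ rectAlg A B) : MeasurableSet t := by
  obtain ⟨I, hI, rfl⟩ := ht
  exact MeasurableSet.biUnion I.countable_toSet fun p hp => ((hI p hp).1).prod ((hI p hp).2)

lemma rectAlg_inter {s t : Set (A × B)} (hs : s ∈ rectAlg A B) (ht : t ∈ rectAlg A B) :
    s ∩ t ∈ rectAlg A B := by
  classical
  obtain ⟨I, hI, rfl⟩ := hs
  obtain ⟨J, hJ, rfl⟩ := ht
  refine ⟨(I ×ˢ J).image (fun pq => (pq.1.1 ∩ pq.2.1, pq.1.2 ∩ pq.2.2)), ?_, ?_⟩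
  · intro p hp
    simp only [Finset.mem_image, Finset.mem_product] at hp
    obtain ⟨⟨p1, p2⟩, ⟨h1, h2⟩, rfl⟩ := hp
    exact ⟨((hI p1 h1).1).inter ((hJ p2 h2).1), ((hI p1 h1).2).inter ((hJ p2 h2).2)⟩
  · ext z
    simp only [mem_inter_iff, mem_iUnion, Finset.mem_image, Finset.mem_product, exists_prop,
      Set.mem_prod]
    constructor
    · rintro ⟨⟨p, hp, hz1⟩, ⟨q, hq, hz2⟩⟩
      exact ⟨(p.1 ∩ q.1, p.2 ∩ q.2), ⟨⟨p, q⟩, ⟨hp, hq⟩, rfl⟩, ⟨hz1.1, hz2.1⟩, ⟨hz1.2, hz2.2⟩⟩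
    · rintro ⟨r, ⟨⟨p, q⟩, ⟨hp, hq⟩, rfl⟩, hz1, hz2⟩
      exact ⟨⟨p, hp, hz1.1, hz2.1⟩, ⟨q, hq, hz1.2, hz2.2⟩⟩

lemma rectAlg_isSetAlgebra : IsSetAlgebra (rectAlg A B) := by
  classical
  have hempty : ∅ ∈ rectAlg A B := ⟨∅, by simp, by simp⟩
  have huniv : (univ : Set (A × B)) ∈ rectAlg A B := by
    refine ⟨{(univ, univ)}, by simp, ?_⟩
    simp [Set.univ_prod_univ]
  refine ⟨hempty, ?_, ?_⟩
  · rintro s ⟨I, hI, rfl⟩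
    induction I using Finset.induction_on with
    | empty => simpa using huniv
    | insert a I' hnotmem ih =>
      have ha := hI a (Finset.mem_insert_self a I')
      have hI' : ∀ p ∈ I', MeasurableSet p.1 ∧ MeasurableSet p.2 :=
        fun p hp => hI p (Finset.mem_insert_of_mem hp)
      have step : ((⋃ p ∈ insert a I', p.1 ×ˢ p.2)ᶜ : Set (A × B)) =
          (a.1 ×ˢ a.2)ᶜ ∩ (⋃ p ∈ I', p.1 ×ˢ p.2)ᶜ := by
        rw [Finset.set_biUnion_insert, compl_union]
      rw [step]
      have hcompl_rect : ((a.1 ×ˢ a.2)ᶜ : Set (A × B)) ∈ rectAlg A B := by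
        refine ⟨{(a.1ᶜ, univ), (univ, a.2ᶜ)}, ?_, ?_⟩
        · intro p hp
          simp only [Finset.mem_insert, Finset.mem_singleton] at hp
          rcases hp with rfl | rfl
          · exact ⟨ha.1.compl, MeasurableSet.univ⟩
          · exact ⟨MeasurableSet.univ, ha.2.compl⟩
        · ext z
          simp only [mem_compl_iff, Set.mem_prod, mem_iUnion, Finset.mem_insert,
            Finset.mem_singleton, exists_prop, not_and_or]
          constructor
          · rintro (h | h)
            · exact ⟨(a.1ᶜ, univ), Or.inl rfl, h, trivial⟩
            · exact ⟨(univ, a.2ᶜ), Or.inr rfl, trivial, h⟩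
          · rintro ⟨p, (rfl | rfl), h1, h2⟩
            · exact Or.inl h1
            · exact Or.inr h2
      exact rectAlg_inter hcompl_rect (ih hI')
  · rintro s t ⟨I, hI, rfl⟩ ⟨J, hJ, rfl⟩
    refine ⟨I ∪ J, ?_, ?_⟩
    · intro p hp
      rcases Finset.mem_union.1 hp with h | h
      exacts [hI p h, hJ p h]
    · rw [Finset.set_biUnion_union]

lemma rectAlg_generateFrom :
    MeasurableSpace.generateFrom (rectAlg A B) = Prod.instMeasurableSpace := by
  apply le_antisymm
  · exact MeasurableSpace.generateFrom_le fun t ht => rectAlg_measurable ht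
  · rw [← generateFrom_prod]
    apply MeasurableSpace.generateFrom_mono
    rintro t ⟨u, hu, v, hv, rfl⟩
    exact ⟨{(u, v)}, by simpa using ⟨hu, hv⟩, by simp⟩

variable {A B : Type*} [MeasurableSpace A] [MeasurableSpace B]

lemma two_factor_lemma {S : Type*} [Finite S]
    (μ : Measure A) (ν : Measure B) [IsProbabilityMeasure μ] [IsProbabilityMeasure ν]
    (Y : A × B → S) (hY : ∀ s, MeasurableSet (Y ⁻¹' {s}))
    {δ : ℝ} (hδ : 0 < δ) :
    ∃ (G : Finset A) (ψ : A → A), (∀ x, ψ x ∈ G) ∧ (∀ f, MeasurableSet (ψ ⁻¹' {f})) ∧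
      ∃ D : Set (A × B), MeasurableSet D ∧
        {p : A × B | Y p ≠ Y (ψ p.1, p.2)} ⊆ D ∧ (μ.prod ν) D < ENNReal.ofReal δ := by
  classical
  have hAne : Nonempty A := by
    by_contra hh
    rw [not_nonempty_iff] at hh
    have h1 : μ univ = 1 := measure_univ
    rw [univ_eq_empty_iff.2 hh, measure_empty] at h1
    exact zero_ne_one h1
  haveI := Fintype.ofFinite S
  set m : ℝ := (Fintype.card S : ℝ) with hm_def
  have hm0 : 0 ≤ m := Nat.cast_nonneg _
  set δ' : ℝ := δ / (2 * (m + 1)) with hδ'_def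
  have hδ' : 0 < δ' := by positivity
  -- measure-dense approximation
  have hdense : (μ.prod ν).MeasureDense (rectAlg A B) :=
    Measure.MeasureDense.of_generateFrom_isSetAlgebra_finite (μ := μ.prod ν) rectAlg_isSetAlgebra
      rectAlg_generateFrom.symm
  choose Bs hBs_mem hBs_close using fun s : S =>
    hdense.approx (Y ⁻¹' {s}) (hY s) (measure_ne_top _ _) δ' hδ'
  have hBs_meas : ∀ s, MeasurableSet (Bs s) := fun s => hdense.measurable _ (hBs_mem s)
  choose I hImeas hIeq using fun s => hBs_mem s
  -- index type of relevant A-sides of rectangles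
  set J : Finset (Set A × Set B) := Finset.univ.biUnion I with hJ_def
  set U : Finset (Set A) := J.image Prod.fst with hU_def
  have humeas : ∀ u : {u // u ∈ U}, MeasurableSet u.1 := by
    rintro ⟨u, hu⟩
    simp only [hU_def, Finset.mem_image] at hu
    obtain ⟨p, hp, rfl⟩ := hu
    simp only [hJ_def, Finset.mem_biUnion] at hp
    obtain ⟨s, _, hp⟩ := hp
    exact (hImeas s p hp).1
  set α : A → ({u // u ∈ U} → Prop) := fun x u => x ∈ u.1 with hα_def
  have hkey : ∀ x y, α x = α y → ∀ (s : S) (b : B), (x, b) ∈ Bs s ↔ (y, b) ∈ Bs s := by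
    intro x y hxy s b
    rw [hIeq s]
    simp only [mem_iUnion, exists_prop]
    constructor
    · rintro ⟨p, hp, hz⟩
      have hpU : p.1 ∈ U := Finset.mem_image_of_mem _ (Finset.mem_biUnion.2 ⟨s, Finset.mem_univ s, hp⟩)
      have h2 : x ∈ p.1 ↔ y ∈ p.1 := by
        simpa [hα_def, eq_iff_iff] using congrFun hxy ⟨p.1, hpU⟩
      exact ⟨p, hp, by rw [Set.mem_prod] at hz ⊢; exact ⟨h2.1 hz.1, hz.2⟩⟩
    · rintro ⟨p, hp, hz⟩
      have hpU : p.1 ∈ U := Finset.mem_image_of_mem _ (Finset.mem_biUnion.2 ⟨s, Finset.mem_univ s, hp⟩)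
      have h2 : x ∈ p.1 ↔ y ∈ p.1 := by
        simpa [hα_def, eq_iff_iff] using congrFun hxy ⟨p.1, hpU⟩
      exact ⟨p, hp, by rw [Set.mem_prod] at hz ⊢; exact ⟨h2.2 hz.1, hz.2⟩⟩
  -- the bad approximation set
  set E : Set (A × B) := ⋃ s, (Y ⁻¹' {s}) ∆ (Bs s) with hE_def
  have hEmeas : MeasurableSet E :=
    MeasurableSet.iUnion fun s => (hY s).symmDiff (hBs_meas s)
  have hEbound : (μ.prod ν) E ≤ ENNReal.ofReal (m * δ') := by
    calc (μ.prod ν) E ≤ ∑' s : S, (μ.prod ν) ((Y ⁻¹' {s}) ∆ (Bs s)) := measure_iUnion_le _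
    _ ≤ ∑' _ : S, ENNReal.ofReal δ' :=
        ENNReal.tsum_le_tsum fun s => (hBs_close s).le
    _ = (Fintype.card S : ℝ≥0∞) * ENNReal.ofReal δ' := by
        rw [tsum_fintype]
        simp [Finset.sum_const, nsmul_eq_mul]
    _ = ENNReal.ofReal (m * δ') := by
        rw [ENNReal.ofReal_mul hm0, hm_def, ENNReal.ofReal_natCast]
  -- section measure function
  set h : A → ℝ≥0∞ := fun x => ν (Prod.mk x ⁻¹' E) with hh_def
  have hhmeas : Measurable h := measurable_measure_prodMk_left hEmeas
  have hhle1 : ∀ x, h x ≤ 1 := fun x => prob_le_one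
  have hEint : ∫⁻ x, h x ∂μ = (μ.prod ν) E := (Measure.prod_apply hEmeas).symm
  -- atoms
  set Av : ({u // u ∈ U} → Prop) → Set A := fun v => α ⁻¹' {v} with hAv_def
  have hAvmeas : ∀ v, MeasurableSet (Av v) := by
    intro v
    have : Av v = ⋂ u : {u // u ∈ U}, if v u then u.1 else u.1ᶜ := by
      ext x
      simp only [hAv_def, mem_preimage, mem_singleton_iff, funext_iff, mem_iInter, hα_def]
      refine forall_congr' fun u => ?_
      by_cases hv : v u <;> simp [hv, eq_iff_iff]
    rw [this]
    exact MeasurableSet.iInter fun u => by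
      by_cases hv : v u
      · simp only [if_pos hv]; exact humeas u
      · simp only [if_neg hv]; exact (humeas u).compl
  -- representatives
  have hrep : ∀ v, ∃ y : A, (Av v).Nonempty →
      y ∈ Av v ∧ h y * μ (Av v) ≤ ∫⁻ x in Av v, h x ∂μ := by
    intro v
    by_cases hne : (Av v).Nonempty
    · obtain ⟨y, hy, hle⟩ := aux_exists_le_avg (μ := μ) hhmeas hhle1 (hAvmeas v) hne
      exact ⟨y, fun _ => ⟨hy, hle⟩⟩
    · exact ⟨Classical.arbitrary A, fun hn => absurd hn hne⟩
  choose q hq using hrep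
  set ψ : A → A := fun x => q (α x) with hψ_def
  have hψself : ∀ x, α (ψ x) = α x := by
    intro x
    have := (hq (α x) ⟨x, rfl⟩).1
    simpa [hAv_def] using this
  refine ⟨(Set.finite_range q).toFinset, ψ, ?_, ?_, ?_⟩
  · intro x
    simp only [Set.Finite.mem_toFinset, mem_range]
    exact ⟨α x, rfl⟩
  · intro f
    have : ψ ⁻¹' {f} = ⋃ v ∈ {v | q v = f}, Av v := by
      ext x
      simp only [mem_preimage, mem_singleton_iff, mem_iUnion, mem_setOf_eq, hAv_def, hψ_def,
        exists_prop]
      constructor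
      · intro hx
        exact ⟨α x, hx, rfl⟩
      · rintro ⟨v, hv, hx⟩
        rw [hx]; exact hv
    rw [this]
    exact MeasurableSet.biUnion (Set.to_countable _) fun v _ => hAvmeas v
  · set T : Set (A × B) := ⋃ v, (Av v) ×ˢ (Prod.mk (q v) ⁻¹' E) with hT_def
    have hTmeas : MeasurableSet T :=
      MeasurableSet.iUnion fun v => (hAvmeas v).prod (measurable_prodMk_left hEmeas)
    refine ⟨E ∪ T, hEmeas.union hTmeas, ?_, ?_⟩
    · rintro ⟨x, b⟩ hbad
      simp only [mem_setOf_eq] at hbad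
      by_contra hD
      simp only [mem_union, not_or] at hD
      obtain ⟨hxE, hxT⟩ := hD
      have hψE : (ψ x, b) ∉ E := by
        intro hc
        exact hxT (mem_iUnion.2 ⟨α x, Set.mem_prod.2 ⟨rfl, hc⟩⟩)
      apply hbad
      set s := Y (x, b) with hs
      have hxB : (x, b) ∈ Bs s := by
        by_contra hc
        exact hxE (mem_iUnion.2 ⟨s, Or.inl ⟨rfl, hc⟩⟩)
      have hψB : (ψ x, b) ∈ Bs s := (hkey x (ψ x) (hψself x).symm s b).1 hxB
      by_contra hc
      exact hψE (mem_iUnion.2 ⟨s, Or.inr ⟨hψB, fun hmem => hc hmem.symm⟩⟩)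
    · have hTbound : (μ.prod ν) T ≤ (μ.prod ν) E := by
        calc (μ.prod ν) T ≤ ∑' v, (μ.prod ν) ((Av v) ×ˢ (Prod.mk (q v) ⁻¹' E)) :=
            measure_iUnion_le _
        _ = ∑' v, μ (Av v) * h (q v) := by
            congr 1; funext v; rw [Measure.prod_prod]
        _ ≤ ∑' v, ∫⁻ x in Av v, h x ∂μ := by
            refine ENNReal.tsum_le_tsum fun v => ?_
            by_cases hne : (Av v).Nonempty
            · rw [mul_comm]; exact (hq v hne).2
            · rw [Set.not_nonempty_iff_eq_empty] at hne
              simp [hne]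
        _ = ∫⁻ x in ⋃ v, Av v, h x ∂μ := by
            rw [lintegral_iUnion hAvmeas]
            intro v w hvw
            simp only [Function.onFun, hAv_def]
            rw [Set.disjoint_left]
            intro x hx hx'
            rw [mem_preimage, mem_singleton_iff] at hx hx'
            exact hvw (hx ▸ hx')
        _ = ∫⁻ x, h x ∂μ := by
            have : ⋃ v, Av v = univ := by
              ext x; simp only [mem_iUnion, mem_univ, iff_true]
              exact ⟨α x, rfl⟩
            rw [this, Measure.restrict_univ]
        _ = (μ.prod ν) E := hEint
      calc (μ.prod ν) (E ∪ T) ≤ (μ.prod ν) E + (μ.prod ν) T := measure_union_le _ _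
      _ ≤ ENNReal.ofReal (m * δ') + ENNReal.ofReal (m * δ') :=
          add_le_add hEbound (hTbound.trans hEbound)
      _ = ENNReal.ofReal (2 * (m * δ')) := by
          rw [two_mul, ENNReal.ofReal_add (by positivity) (by positivity)]
      _ < ENNReal.ofReal δ := by
          rw [ENNReal.ofReal_lt_ofReal_iff hδ, hδ'_def, div_eq_mul_inv]
          have h1 : 0 < 2 * (m + 1) := by linarith
          have h2 : 2 * m / (2 * (m + 1)) < 1 := by
            rw [div_lt_one h1]; linarith
          have h3 : 2 * (m * (δ * (2 * (m + 1))⁻¹)) = δ * (2 * m / (2 * (m + 1))) := by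
            rw [div_eq_mul_inv]; ring
          rw [h3]
          calc δ * (2 * m / (2 * (m + 1))) < δ * 1 := mul_lt_mul_of_pos_left h2 hδ
            _ = δ := mul_one δ

end Rect

section PiCoord


lemma pi_coord_lemma {n : ℕ} {Ω : Fin n → Type*} [∀ i, MeasurableSpace (Ω i)]
    (ν : ∀ i, Measure (Ω i)) [∀ i, IsProbabilityMeasure (ν i)]
    {S : Type*} [Finite S] (X : (∀ i, Ω i) → S) (hX : ∀ s, MeasurableSet (X ⁻¹' {s}))
    (k : Fin n) {δ : ℝ} (hδ : 0 < δ) :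
    ∃ (G : Finset (Ω k)) (ψ : Ω k → Ω k), (∀ x, ψ x ∈ G) ∧
      (∀ f, MeasurableSet (ψ ⁻¹' {f})) ∧
      ∃ D : Set (∀ i, Ω i), MeasurableSet D ∧
        {ω | X ω ≠ X (Function.update ω k (ψ (ω k)))} ⊆ D ∧
        Measure.pi ν D < ENNReal.ofReal δ := by
  classical
  set p : Fin n → Prop := fun i => i = k with hp_def
  letI : Unique {i // p i} := ⟨⟨⟨k, rfl⟩⟩, fun a => Subtype.ext a.2⟩
  letI : Fintype {i // p i} := Subtype.fintype p
  set e := MeasurableEquiv.piEquivPiSubtypeProd Ω p with he_def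
  have hmp := measurePreserving_piEquivPiSubtypeProd ν p
  set Y : (∀ i : {i // p i}, Ω i) × (∀ i : {i // ¬ p i}, Ω i) → S :=
    fun q => X (e.symm q) with hY_def
  have hYmeas : ∀ s, MeasurableSet (Y ⁻¹' {s}) := fun s => e.symm.measurable (hX s)
  obtain ⟨GA, ψA, hGA, hfibA, D, hDmeas, hDsub, hDlt⟩ :=
    two_factor_lemma (Measure.pi fun i : {i // p i} => ν i)
      (Measure.pi fun i : {i // ¬ p i} => ν i) Y hYmeas hδ
  set eA : (∀ i : {i // p i}, Ω i) ≃ᵐ Ω k :=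
    MeasurableEquiv.piUnique (fun i : {i // p i} => Ω i) with heA_def
  set ψ : Ω k → Ω k := fun x => eA (ψA (eA.symm x)) with hψ_def
  have hsymm_eq : ∀ ω : ∀ i, Ω i,
      e.symm (ψA (e ω).1, (e ω).2) = Function.update ω k (ψ (ω k)) := by
    intro ω
    have h3 : (e ω).1 = eA.symm (ω k) := by
      funext j
      have hj : j = default := Unique.eq_default j
      subst hj
      show ω k = eA.symm (ω k) default
      exact (uniqueElim_default (α := fun i : {i // p i} => Ω i.1) (ω k)).symm
    funext i
    have hval : e.symm (ψA (e ω).1, (e ω).2) i =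
        if h : p i then ψA (e ω).1 ⟨i, h⟩ else (e ω).2 ⟨i, h⟩ := rfl
    rw [hval]
    by_cases hi : p i
    · rw [dif_pos hi]
      have hik : i = k := hi
      subst hik
      rw [Function.update_self]
      show ψA (e ω).1 ⟨i, hi⟩ = eA (ψA (eA.symm (ω i)))
      rw [h3]
      rfl
    · rw [dif_neg hi, Function.update_of_ne hi]
      rfl
  refine ⟨GA.image eA, ψ, ?_, ?_, e ⁻¹' D, e.measurable hDmeas, ?_, ?_⟩
  · intro x
    exact Finset.mem_image_of_mem _ (hGA _)
  · intro f
    have : ψ ⁻¹' {f} = eA.symm ⁻¹' (ψA ⁻¹' {eA.symm f}) := by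
      ext x
      simp only [hψ_def, mem_preimage, mem_singleton_iff]
      exact ⟨fun hx => by rw [← hx]; simp, fun hx => by rw [hx]; simp⟩
    rw [this]
    exact eA.symm.measurable (hfibA (eA.symm f))
  · intro ω hω
    simp only [mem_setOf_eq] at hω
    apply hDsub
    simp only [mem_setOf_eq, hY_def]
    rw [MeasurableEquiv.symm_apply_apply, hsymm_eq ω]
    exact hω
  · rw [hmp.measure_preimage hDmeas.nullMeasurableSet]
    exact hDlt

end PiCoord

/-- Let (Ω_i, σ_i, P_i), for i = 1, …, n, be probability spaces and let
(Ω, σ, P) be their product. Let S be a finite set and let X : Ω → S be a measurable random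
variable (S carrying the discrete σ-algebra, i.e. every fibre of X is measurable). Then for
every ε > 0 there exist, for each i, a finite subset F_i ⊆ Ω_i and a measurable function
φ_i : Ω_i → Ω_i with range contained in F_i (measurable w.r.t. the discrete σ-algebra on F_i,
i.e. every fibre of φ_i is measurable), such that the map
φ(ω₁,…,ω_n) = (φ₁(ω₁),…,φ_n(ω_n)) satisfies P[{ω : X(ω) ≠ X(φ(ω))}] < ε. -/
theorem stmt18 {n : ℕ} {Ω : Fin n → Type*} [∀ i, MeasurableSpace (Ω i)]
    (P : ∀ i, Measure (Ω i)) [∀ i, IsProbabilityMeasure (P i)]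
    {S : Type*} [Finite S] (X : (∀ i, Ω i) → S)
    (hX : ∀ s : S, MeasurableSet (X ⁻¹' {s}))
    (ε : ℝ) (hε : 0 < ε) :
    ∃ (F : ∀ i, Finset (Ω i)) (φ : ∀ i, Ω i → Ω i),
      (∀ i, ∀ x : Ω i, φ i x ∈ F i) ∧
      (∀ i, ∀ f : Ω i, MeasurableSet ((φ i) ⁻¹' {f})) ∧
      Measure.pi P {ω | X ω ≠ X (fun i => φ i (ω i))} < ENNReal.ofReal ε := by
  classical
  have hne : ∀ i, Nonempty (Ω i) := by
    intro i
    by_contra hh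
    rw [not_nonempty_iff] at hh
    have h1 : P i univ = 1 := measure_univ
    rw [univ_eq_empty_iff.2 hh, measure_empty] at h1
    exact zero_ne_one h1
  set δ : ℝ := ε / (n + 1) with hδ_def
  have hδ : 0 < δ := by positivity
  have main : ∀ k : ℕ, k ≤ n → ∃ (F : ∀ i, Finset (Ω i)) (φ : ∀ i, Ω i → Ω i),
      (∀ i, ∀ x : Ω i, φ i x ∈ F i) ∧
      (∀ i, ∀ f : Ω i, MeasurableSet ((φ i) ⁻¹' {f})) ∧
      Measure.pi P {ω | X ω ≠ X (fun i => if (i : ℕ) < k then φ i (ω i) else ω i)} ≤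
        k * ENNReal.ofReal δ := by
    intro k
    induction k with
    | zero =>
      intro _
      refine ⟨fun i => {(hne i).some}, fun i _ => (hne i).some,
        fun i x => Finset.mem_singleton_self _, ?_, ?_⟩
      · intro i f
        by_cases hf : (hne i).some = f
        · have : (fun (_ : Ω i) => (hne i).some) ⁻¹' {f} = univ := by
            ext x; simp [hf]
          rw [this]; exact MeasurableSet.univ
        · have : (fun (_ : Ω i) => (hne i).some) ⁻¹' {f} = ∅ := by
            ext x; simp [hf]
          rw [this]; exact MeasurableSet.empty
      · have : {ω | X ω ≠ X (fun i => if (i : ℕ) < 0 then (hne i).some else ω i)} = ∅ := by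
          ext ω
          simp only [mem_setOf_eq, mem_empty_iff_false, iff_false, not_not, Nat.not_lt_zero,
            if_false]
        rw [this]
        simp
    | succ k ih =>
      intro hk1
      obtain ⟨F, φ, h1, h2, h3⟩ := ih (Nat.le_of_succ_le hk1)
      have hφmeas : ∀ i, Measurable (φ i) :=
        fun i => aux_measurable_of_finite_range (h1 i) (h2 i)
      set k0 : Fin n := ⟨k, hk1⟩ with hk0_def
      set ν : ∀ i, Measure (Ω i) :=
        fun i => if (i : ℕ) < k then (P i).map (φ i) else P i with hν_def
      haveI hνprob : ∀ i, IsProbabilityMeasure (ν i) := by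
        intro i
        by_cases h : (i : ℕ) < k
        · simp only [hν_def, if_pos h]
          exact Measure.isProbabilityMeasure_map (hφmeas i).aemeasurable
        · simp only [hν_def, if_neg h]
          infer_instance
      obtain ⟨G, ψ, hG, hfib, D, hDm, hDsub, hDlt⟩ := pi_coord_lemma ν X hX k0 hδ
      set φ' : ∀ i, Ω i → Ω i := Function.update φ k0 ψ with hφ'_def
      refine ⟨Function.update F k0 G, φ', ?_, ?_, ?_⟩
      · intro i x
        by_cases hi : i = k0
        · subst hi; simp only [hφ'_def, Function.update_self]; exact hG x
        · simp only [hφ'_def, Function.update_of_ne hi]; exact h1 i x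
      · intro i f
        by_cases hi : i = k0
        · subst hi; simp only [hφ'_def, Function.update_self]; exact hfib f
        · simp only [hφ'_def, Function.update_of_ne hi]; exact h2 i f
      · set T : (∀ i, Ω i) → (∀ i, Ω i) :=
          fun ω i => if (i : ℕ) < k then φ i (ω i) else ω i with hT_def
        have hT : MeasurePreserving T (Measure.pi P) (Measure.pi ν) := by
          have hmp := measurePreserving_pi P ν
            (f := fun i => if (i : ℕ) < k then φ i else id) (fun i => by
              by_cases h : (i : ℕ) < k
              · simp only [if_pos h, hν_def]
                exact ⟨hφmeas i, rfl⟩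
              · simp only [if_neg h, hν_def]
                exact MeasurePreserving.id _)
          convert hmp using 1
          funext ω
          funext i
          simp only [hT_def]
          by_cases h : (i : ℕ) < k <;> simp [h]
        have hgeq : ∀ ω, (fun (i : Fin n) => if (i : ℕ) < k + 1 then φ' i (ω i) else ω i) =
            Function.update (T ω) k0 (ψ (T ω k0)) := by
          intro ω
          funext i
          have hk0val : (k0 : ℕ) = k := rfl
          by_cases hi : i = k0
          · subst hi
            rw [Function.update_self]
            have hTi : T ω k0 = ω k0 := by
              show (if (k0 : ℕ) < k then φ k0 (ω k0) else ω k0) = ω k0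
              rw [if_neg (by rw [hk0val]; exact lt_irrefl k)]
            rw [hTi]
            show (if (k0 : ℕ) < k + 1 then φ' k0 (ω k0) else ω k0) = ψ (ω k0)
            rw [if_pos (by rw [hk0val]; exact Nat.lt_succ_self k), hφ'_def,
              Function.update_self]
          · rw [Function.update_of_ne hi]
            have hik : (i : ℕ) ≠ k := by
              intro hc
              exact hi (Fin.ext hc)
            simp only [hφ'_def, Function.update_of_ne hi, hT_def]
            by_cases h : (i : ℕ) < k
            · rw [if_pos h, if_pos (Nat.lt_succ_of_lt h)]
            · rw [if_neg h, if_neg (by omega)]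
        have hsubset : {ω | X ω ≠ X (fun (i : Fin n) => if (i : ℕ) < k + 1 then φ' i (ω i) else ω i)} ⊆
            {ω | X ω ≠ X (T ω)} ∪ T ⁻¹' D := by
          intro ω hω
          simp only [mem_setOf_eq] at hω
          by_contra hc
          simp only [mem_union, mem_setOf_eq, mem_preimage, not_or, not_not] at hc
          obtain ⟨hc1, hc2⟩ := hc
          have hc2' : X (T ω) = X (Function.update (T ω) k0 (ψ (T ω k0))) := by
            by_contra hc3
            exact hc2 (hDsub hc3)
          exact hω (by rw [hc1, hc2', hgeq ω])
        calc Measure.pi P {ω | X ω ≠ X (fun i => if (i : ℕ) < k + 1 then φ' i (ω i) else ω i)}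
            ≤ Measure.pi P ({ω | X ω ≠ X (T ω)} ∪ T ⁻¹' D) := measure_mono hsubset
          _ ≤ Measure.pi P {ω | X ω ≠ X (T ω)} + Measure.pi P (T ⁻¹' D) := measure_union_le _ _
          _ ≤ k * ENNReal.ofReal δ + ENNReal.ofReal δ := by
              refine add_le_add ?_ ?_
              · exact h3
              · rw [hT.measure_preimage hDm.nullMeasurableSet]
                exact hDlt.le
          _ = (k + 1 : ℕ) * ENNReal.ofReal δ := by
              push_cast
              ring
  obtain ⟨F, φ, h1, h2, h3⟩ := main n le_rfl
  refine ⟨F, φ, h1, h2, ?_⟩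
  have hfun : ∀ ω : ∀ i, Ω i,
      (fun (i : Fin n) => if (i : ℕ) < n then φ i (ω i) else ω i) = fun i => φ i (ω i) :=
    fun ω => funext fun i => if_pos i.isLt
  simp only [hfun] at h3
  refine lt_of_le_of_lt h3 ?_
  have heq : (n : ℝ≥0∞) * ENNReal.ofReal δ = ENNReal.ofReal (n * δ) := by
    rw [ENNReal.ofReal_mul (Nat.cast_nonneg n), ENNReal.ofReal_natCast]
  rw [heq, ENNReal.ofReal_lt_ofReal_iff hε, hδ_def]
  have hn1 : 0 < (n : ℝ) + 1 := by positivity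
  calc (n : ℝ) * (ε / (n + 1)) = ε * ((n : ℝ) / (n + 1)) := by ring
    _ < ε * 1 := by
        refine mul_lt_mul_of_pos_left ?_ hε
        rw [div_lt_one hn1]
        linarith
    _ = ε := mul_one ε
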